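/- For all h, s ∈ (0,1): −(4/(h²(1−h)²))·(s−h)² ≤ q(s) − q(h) − q'(h)(s−h) ≤ −(s−h)², where q(s) = (2π)^{-1/2} e^{-Ψ(s)²/2} and q'(h) = −Ψ(h). -/

import Mathlib

open MeasureTheory ProbabilityTheory Real Set Filter

noncomputable def gamma1 : Measure ℝ := gaussianReal 0 1

noncomputable def Phi (t : ℝ) : ℝ :=
  ∫ s in Set.Iic t, (Real.sqrt (2 * Real.pi))⁻¹ * Real.exp (-s ^ 2 / 2)

noncomputable def Psi : ℝ → ℝ := Function.invFun Phi
noncomputable def q2 (s : ℝ) : ℝ := (Real.sqrt (2 * Real.pi))⁻¹ * Real.exp (-(Psi s) ^ 2 / 2)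

open Topology

noncomputable def phi (t : ℝ) : ℝ := (Real.sqrt (2 * Real.pi))⁻¹ * Real.exp (-t ^ 2 / 2)

lemma phi_pos (t : ℝ) : 0 < phi t := by
  apply mul_pos (inv_pos.2 (Real.sqrt_pos.2 (by positivity))) (Real.exp_pos _)

lemma phi_le (t : ℝ) : phi t ≤ (Real.sqrt (2 * Real.pi))⁻¹ := by
  have h1 : Real.exp (-t ^ 2 / 2) ≤ 1 := by
    rw [Real.exp_le_one_iff]; nlinarith [sq_nonneg t]
  have h2 : (0:ℝ) ≤ (Real.sqrt (2 * Real.pi))⁻¹ := by positivity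
  calc phi t ≤ (Real.sqrt (2 * Real.pi))⁻¹ * 1 := mul_le_mul_of_nonneg_left h1 h2
  _ = _ := mul_one _

lemma sqrt_two_pi_gt_two : (2:ℝ) < Real.sqrt (2 * Real.pi) := by
  have : (4:ℝ) < 2 * Real.pi := by nlinarith [Real.pi_gt_three]
  nlinarith [Real.sq_sqrt (by positivity : (0:ℝ) ≤ 2 * Real.pi),
    Real.sqrt_nonneg (2 * Real.pi)]

lemma phi_lt_half (t : ℝ) : phi t < 1/2 := by
  have h := phi_le t
  have h2 : (Real.sqrt (2 * Real.pi))⁻¹ < 1/2 := by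
    rw [inv_lt_comm₀ (by positivity) (by norm_num)]
    simpa using sqrt_two_pi_gt_two
  linarith

lemma integrable_phi : Integrable phi := by
  have : Integrable (fun x : ℝ => Real.exp (-(1/2) * x ^ 2)) := integrable_exp_neg_mul_sq (by norm_num)
  have h2 := this.const_mul (Real.sqrt (2 * Real.pi))⁻¹
  convert h2 using 2 with t
  rw [phi]; ring_nf

lemma integral_phi : ∫ t, phi t = 1 := by
  have h : ∫ x : ℝ, Real.exp (-(1/2) * x ^ 2) = Real.sqrt (Real.pi / (1/2)) :=
    integral_gaussian (1/2)
  have h2 : ∫ t, phi t = (Real.sqrt (2 * Real.pi))⁻¹ * ∫ x : ℝ, Real.exp (-(1/2) * x ^ 2) := by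
    rw [← integral_const_mul]; congr 1 with t; rw [phi]; ring_nf
  rw [h2, h]
  have : Real.pi / (1/2) = 2 * Real.pi := by ring
  rw [this, inv_mul_cancel₀ (by positivity)]

lemma continuous_phi : Continuous phi := by
  apply Continuous.mul continuous_const
  exact (Real.continuous_exp.comp ((continuous_pow 2).neg.div_const 2))


lemma Phi_eq (t : ℝ) : Phi t = ∫ s in Set.Iic t, phi s := rfl

lemma Phi_sub (a b : ℝ) : Phi b - Phi a = ∫ t in a..b, phi t := by
  rw [Phi_eq, Phi_eq]
  exact intervalIntegral.integral_Iic_sub_Iic integrable_phi.integrableOn integrable_phi.integrableOn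

lemma hasDerivAt_Phi (t : ℝ) : HasDerivAt Phi (phi t) t := by
  have h : HasDerivAt (fun u => ∫ x in (0:ℝ)..u, phi x) (phi t) t :=
    intervalIntegral.integral_hasDerivAt_right integrable_phi.intervalIntegrable
      (continuous_phi.stronglyMeasurableAtFilter _ _) continuous_phi.continuousAt
  have h2 : HasDerivAt (fun u => Phi 0 + ∫ x in (0:ℝ)..u, phi x) (phi t) t := h.const_add _
  convert h2 using 1
  funext u
  have := Phi_sub 0 u
  linarith

lemma differentiable_Phi : Differentiable ℝ Phi := fun t => (hasDerivAt_Phi t).differentiableAt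

lemma continuous_Phi : Continuous Phi := differentiable_Phi.continuous

lemma strictMono_Phi : StrictMono Phi := by
  intro a b hab
  have h : 0 < ∫ t in a..b, phi t :=
    intervalIntegral.intervalIntegral_pos_of_pos integrable_phi.intervalIntegrable phi_pos hab
  have := Phi_sub a b; linarith

lemma Phi_nonneg (t : ℝ) : 0 ≤ Phi t :=
  setIntegral_nonneg measurableSet_Iic (fun x _ => (phi_pos x).le)

lemma Phi_pos (t : ℝ) : 0 < Phi t := lt_of_le_of_lt (Phi_nonneg (t-1)) (strictMono_Phi (by linarith))

lemma Phi_add_tail (t : ℝ) : Phi t + ∫ s in Set.Ioi t, phi s = 1 := by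
  rw [Phi_eq, ← integral_phi]
  exact intervalIntegral.integral_Iic_add_Ioi integrable_phi.integrableOn integrable_phi.integrableOn

lemma Phi_le_one (t : ℝ) : Phi t ≤ 1 := by
  have h := Phi_add_tail t
  have h2 : 0 ≤ ∫ s in Set.Ioi t, phi s :=
    setIntegral_nonneg measurableSet_Ioi (fun x _ => (phi_pos x).le)
  linarith

lemma Phi_lt_one (t : ℝ) : Phi t < 1 := lt_of_lt_of_le (strictMono_Phi (by linarith : t < t+1)) (Phi_le_one (t+1))

lemma phi_le_exp (x : ℝ) : phi x ≤ Real.exp (1/2) * (Real.sqrt (2 * Real.pi))⁻¹ * Real.exp x := by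
  have hle : Real.exp (-x^2/2) ≤ Real.exp (1/2 + x) := Real.exp_le_exp.2 (by nlinarith [sq_nonneg (x+1)])
  rw [phi]
  calc (Real.sqrt (2 * Real.pi))⁻¹ * Real.exp (-x^2/2)
      ≤ (Real.sqrt (2 * Real.pi))⁻¹ * Real.exp (1/2 + x) :=
        mul_le_mul_of_nonneg_left hle (by positivity)
    _ = _ := by rw [Real.exp_add]; ring

lemma phi_le_exp_neg (x : ℝ) : phi x ≤ Real.exp (1/2) * (Real.sqrt (2 * Real.pi))⁻¹ * Real.exp (-x) := by
  have hle : Real.exp (-x^2/2) ≤ Real.exp (1/2 + -x) := Real.exp_le_exp.2 (by nlinarith [sq_nonneg (x-1)])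
  rw [phi]
  calc (Real.sqrt (2 * Real.pi))⁻¹ * Real.exp (-x^2/2)
      ≤ (Real.sqrt (2 * Real.pi))⁻¹ * Real.exp (1/2 + -x) :=
        mul_le_mul_of_nonneg_left hle (by positivity)
    _ = _ := by rw [Real.exp_add]; ring

lemma tendsto_Phi_atBot : Tendsto Phi atBot (𝓝 0) := by
  set C := Real.exp (1/2) * (Real.sqrt (2 * Real.pi))⁻¹ with hC
  have hble : ∀ t, Phi t ≤ C * Real.exp t := by
    intro t
    have h1 : Phi t ≤ ∫ x in Set.Iic t, C * Real.exp x := by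
      rw [Phi_eq]
      apply setIntegral_mono_on integrable_phi.integrableOn
        ((integrableOn_exp_Iic t).const_mul C) measurableSet_Iic
      intro x _; exact phi_le_exp x
    have h2 : ∫ x in Set.Iic t, C * Real.exp x = C * Real.exp t := by
      rw [MeasureTheory.integral_const_mul, integral_exp_Iic]
    linarith
  have hlim : Tendsto (fun t => C * Real.exp t) atBot (𝓝 0) := by
    simpa using (Real.tendsto_exp_atBot.const_mul C)
  exact tendsto_of_tendsto_of_tendsto_of_le_of_le tendsto_const_nhds hlim
    (fun t => Phi_nonneg t) hble

lemma tendsto_Phi_atTop : Tendsto Phi atTop (𝓝 1) := by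
  set C := Real.exp (1/2) * (Real.sqrt (2 * Real.pi))⁻¹ with hC
  have hble : ∀ t, 1 - Phi t ≤ C * Real.exp (-t) := by
    intro t
    have h1 : ∫ s in Set.Ioi t, phi s ≤ ∫ x in Set.Ioi t, C * Real.exp (-x) := by
      apply setIntegral_mono_on integrable_phi.integrableOn _ measurableSet_Ioi
      · intro x _; exact phi_le_exp_neg x
      · have := (exp_neg_integrableOn_Ioi t (by norm_num : (0:ℝ) < 1)).const_mul C
        have h' : Integrable (fun x => C * Real.exp (-x)) (volume.restrict (Set.Ioi t)) := by
          simpa using this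
        exact h'
    have h2 : ∫ x in Set.Ioi t, C * Real.exp (-x) = C * Real.exp (-t) := by
      rw [MeasureTheory.integral_const_mul, integral_exp_neg_Ioi]
    have h3 := Phi_add_tail t
    linarith
  have hlim : Tendsto (fun t => 1 - C * Real.exp (-t)) atTop (𝓝 1) := by
    have : Tendsto (fun t : ℝ => C * Real.exp (-t)) atTop (𝓝 0) := by
      simpa using ((Real.tendsto_exp_atBot.comp tendsto_neg_atTop_atBot).const_mul C)
    simpa using (tendsto_const_nhds (x := (1:ℝ)) (f := atTop)).sub this
  exact tendsto_of_tendsto_of_tendsto_of_le_of_le hlim tendsto_const_nhds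
    (fun t => by linarith [hble t]) (fun t => Phi_le_one t)

lemma Phi_surj {s : ℝ} (hs : s ∈ Set.Ioo (0:ℝ) 1) : ∃ x, Phi x = s := by
  obtain ⟨a, ha⟩ : ∃ a, Phi a < s :=
    ((tendsto_Phi_atBot.eventually_lt_const hs.1).exists)
  obtain ⟨b, hb⟩ : ∃ b, s < Phi b :=
    ((tendsto_Phi_atTop.eventually_const_lt hs.2).exists)
  have hab : a ≤ b := by
    by_contra hcon
    push_neg at hcon
    exact absurd (strictMono_Phi hcon) (by linarith)
  have := intermediate_value_Icc hab continuous_Phi.continuousOn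
  obtain ⟨x, _, hx⟩ := this ⟨ha.le, hb.le⟩
  exact ⟨x, hx⟩


lemma Phi_Psi {s : ℝ} (hs : s ∈ Set.Ioo (0:ℝ) 1) : Phi (Psi s) = s :=
  Function.invFun_eq (Phi_surj hs)

lemma Psi_Phi (x : ℝ) : Psi (Phi x) = x :=
  Function.leftInverse_invFun strictMono_Phi.injective x

lemma Psi_strictMonoOn : StrictMonoOn Psi (Set.Ioo (0:ℝ) 1) := by
  intro a ha b hb hab
  have : Phi (Psi a) < Phi (Psi b) := by rw [Phi_Psi ha, Phi_Psi hb]; exact hab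
  exact strictMono_Phi.lt_iff_lt.1 this

lemma continuousAt_Psi {s : ℝ} (hs : s ∈ Set.Ioo (0:ℝ) 1) : ContinuousAt Psi s := by
  rw [ContinuousAt]
  apply tendsto_order.2
  constructor
  · intro b hb
    have hPb : Phi b < s := by
      have h2 := strictMono_Phi hb
      rwa [Phi_Psi hs] at h2
    filter_upwards [Ioo_mem_nhds hPb hs.2] with y hy
    have hy1 : y ∈ Set.Ioo (0:ℝ) 1 := ⟨lt_trans (Phi_pos b) hy.1, hy.2⟩
    have h3 := Psi_strictMonoOn ⟨Phi_pos b, Phi_lt_one b⟩ hy1 hy.1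
    rwa [Psi_Phi] at h3
  · intro b hb
    have hPb : s < Phi b := by
      have h2 := strictMono_Phi hb
      rwa [Phi_Psi hs] at h2
    filter_upwards [Ioo_mem_nhds hs.1 hPb] with y hy
    have hy1 : y ∈ Set.Ioo (0:ℝ) 1 := ⟨hy.1, lt_trans hy.2 (Phi_lt_one b)⟩
    have h3 := Psi_strictMonoOn hy1 ⟨Phi_pos b, Phi_lt_one b⟩ hy.2
    rwa [Psi_Phi] at h3

lemma hasDerivAt_Psi {s : ℝ} (hs : s ∈ Set.Ioo (0:ℝ) 1) :
    HasDerivAt Psi (phi (Psi s))⁻¹ s := by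
  apply HasDerivAt.of_local_left_inverse (continuousAt_Psi hs) (hasDerivAt_Phi (Psi s))
    (phi_pos _).ne'
  filter_upwards [Ioo_mem_nhds hs.1 hs.2] with y hy using Phi_Psi hy


lemma q2_eq (s : ℝ) : q2 s = phi (Psi s) := rfl

lemma q2_pos (s : ℝ) : 0 < q2 s := phi_pos _

lemma q2_lt_half (s : ℝ) : q2 s < 1/2 := phi_lt_half _

lemma hasDerivAt_phi (x : ℝ) : HasDerivAt phi (-x * phi x) x := by
  have h1 : HasDerivAt (fun x : ℝ => -x ^ 2 / 2) (-x) x := by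
    have := ((hasDerivAt_pow 2 x).neg.div_const 2)
    refine this.congr_deriv ?_
    simp; ring
  have h2 := (Real.hasDerivAt_exp (-x ^ 2 / 2)).comp x h1
  have h3 := h2.const_mul (Real.sqrt (2 * Real.pi))⁻¹
  refine h3.congr_deriv ?_
  rw [phi]; ring

lemma hasDerivAt_q2 {s : ℝ} (hs : s ∈ Set.Ioo (0:ℝ) 1) : HasDerivAt q2 (-(Psi s)) s := by
  have h := (hasDerivAt_phi (Psi s)).comp s (hasDerivAt_Psi hs)
  have h2 : -(Psi s) * phi (Psi s) * (phi (Psi s))⁻¹ = -(Psi s) := by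
    field_simp [(phi_pos (Psi s)).ne']
  rw [h2] at h
  exact h

lemma Phi_zero : Phi 0 = 1/2 := by
  have h1 : Phi 0 = ∫ x in Set.Ioi (0:ℝ), phi x := by
    rw [Phi_eq]
    have heven : ∀ x : ℝ, phi x = phi (-x) := by
      intro x; rw [phi, phi, neg_pow]; norm_num
    calc ∫ s in Set.Iic (0:ℝ), phi s = ∫ s in Set.Iic (0:ℝ), phi (-s) := by
          apply setIntegral_congr_fun measurableSet_Iic
          intro x _; exact heven x
      _ = ∫ x in Set.Ioi (-(0:ℝ)), phi x := integral_comp_neg_Iic 0 phi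
      _ = _ := by norm_num
  have h3 := Phi_add_tail 0
  rw [h1] at *
  linarith

lemma Psi_half : Psi (1/2) = 0 := by
  rw [← Phi_zero, Psi_Phi]

lemma tendsto_Psi_zero : Tendsto Psi (𝓝[>] (0:ℝ)) atBot := by
  rw [tendsto_atBot]
  intro b
  filter_upwards [Ioo_mem_nhdsGT_of_mem ⟨le_refl (0:ℝ), Phi_pos b⟩] with y hy
  have h := Psi_strictMonoOn ⟨hy.1, lt_trans hy.2 (Phi_lt_one b)⟩ ⟨Phi_pos b, Phi_lt_one b⟩ hy.2
  rw [Psi_Phi] at h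
  exact h.le

lemma tendsto_Psi_one : Tendsto Psi (𝓝[<] (1:ℝ)) atTop := by
  rw [tendsto_atTop]
  intro b
  filter_upwards [Ioo_mem_nhdsLT_of_mem ⟨Phi_lt_one b, le_refl (1:ℝ)⟩] with y hy
  have h := Psi_strictMonoOn ⟨Phi_pos b, Phi_lt_one b⟩ ⟨lt_trans (Phi_pos b) hy.1, hy.2⟩ hy.1
  rw [Psi_Phi] at h
  exact h.le

lemma tendsto_phi_atBot : Tendsto phi atBot (𝓝 0) := by
  set C := Real.exp (1/2) * (Real.sqrt (2 * Real.pi))⁻¹ with hC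
  have hlim : Tendsto (fun t => C * Real.exp t) atBot (𝓝 0) := by
    simpa using (Real.tendsto_exp_atBot.const_mul C)
  exact tendsto_of_tendsto_of_tendsto_of_le_of_le tendsto_const_nhds hlim
    (fun t => (phi_pos t).le) (fun t => phi_le_exp t)

lemma tendsto_phi_atTop : Tendsto phi atTop (𝓝 0) := by
  set C := Real.exp (1/2) * (Real.sqrt (2 * Real.pi))⁻¹ with hC
  have hlim : Tendsto (fun t => C * Real.exp (-t)) atTop (𝓝 0) := by
    simpa using ((Real.tendsto_exp_atBot.comp tendsto_neg_atTop_atBot).const_mul C)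
  exact tendsto_of_tendsto_of_tendsto_of_le_of_le tendsto_const_nhds hlim
    (fun t => (phi_pos t).le) (fun t => phi_le_exp_neg t)

lemma tendsto_q2_zero : Tendsto q2 (𝓝[>] (0:ℝ)) (𝓝 0) :=
  tendsto_phi_atBot.comp tendsto_Psi_zero

lemma tendsto_q2_one : Tendsto q2 (𝓝[<] (1:ℝ)) (𝓝 0) :=
  tendsto_phi_atTop.comp tendsto_Psi_one

noncomputable def Wf (t : ℝ) : ℝ := -Psi t + 2*t

lemma hasDerivAt_Wf {t : ℝ} (ht : t ∈ Set.Ioo (0:ℝ) 1) :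
    HasDerivAt Wf (-(q2 t)⁻¹ + 2) t := by
  have h := (hasDerivAt_Psi ht).neg.add ((hasDerivAt_id t).const_mul 2)
  refine h.congr_deriv ?_
  rw [q2_eq]; ring

lemma Wf_deriv_neg {t : ℝ} (ht : t ∈ Set.Ioo (0:ℝ) 1) : -(q2 t)⁻¹ + 2 < 0 := by
  have h1 : 2 < (q2 t)⁻¹ := by
    rw [lt_inv_comm₀ (by norm_num) (q2_pos t)]
    have := q2_lt_half t
    linarith
  linarith

lemma Wf_strictAnti : StrictAntiOn Wf (Set.Ioo (0:ℝ) 1) := by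
  apply strictAntiOn_of_deriv_neg (convex_Ioo 0 1)
  · intro t ht; exact (hasDerivAt_Wf ht).continuousAt.continuousWithinAt
  · rw [interior_Ioo]
    intro t ht
    rw [(hasDerivAt_Wf ht).deriv]
    exact Wf_deriv_neg ht

noncomputable def Kf (t : ℝ) : ℝ := q2 t - t * (1 - t)

lemma hasDerivAt_Kf {t : ℝ} (ht : t ∈ Set.Ioo (0:ℝ) 1) :
    HasDerivAt Kf (Wf t - 1) t := by
  have h2 : HasDerivAt (fun t : ℝ => t * (1 - t)) (1 - 2*t) t := by
    have := (hasDerivAt_id t).mul ((hasDerivAt_id t).const_sub 1)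
    refine this.congr_deriv ?_
    simp; ring
  have h := (hasDerivAt_q2 ht).sub h2
  refine h.congr_deriv ?_
  rw [Wf]; ring

lemma Wf_half : Wf (1/2) = 1 := by rw [Wf, Psi_half]; norm_num

lemma Kf_nonneg {t : ℝ} (ht : t ∈ Set.Ioo (0:ℝ) 1) : 0 ≤ Kf t := by
  have h2 : (1/2 : ℝ) ∈ Set.Ioo (0:ℝ) 1 := by norm_num
  rcases le_or_gt t (1/2) with hle | hgt
  · -- K strictMono on Ioc 0 (1/2)
    have hmono : StrictMonoOn Kf (Set.Ioc (0:ℝ) (1/2)) := by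
      apply strictMonoOn_of_deriv_pos (convex_Ioc 0 (1/2))
      · intro u hu
        have hu1 : u ∈ Set.Ioo (0:ℝ) 1 := ⟨hu.1, lt_of_le_of_lt hu.2 (by norm_num)⟩
        exact (hasDerivAt_Kf hu1).continuousAt.continuousWithinAt
      · rw [interior_Ioc]
        intro u hu
        have hu1 : u ∈ Set.Ioo (0:ℝ) 1 := ⟨hu.1, lt_trans hu.2 (by norm_num)⟩
        rw [(hasDerivAt_Kf hu1).deriv]
        have := Wf_strictAnti hu1 h2 hu.2
        rw [Wf_half] at this
        linarith
    have hlim : Tendsto Kf (𝓝[>] (0:ℝ)) (𝓝 0) := by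
      have h1 : Tendsto (fun u : ℝ => u * (1 - u)) (𝓝[>] (0:ℝ)) (𝓝 0) := by
        have hc : Continuous (fun u : ℝ => u * (1 - u)) := by continuity
        have := (hc.tendsto 0).mono_left (nhdsWithin_le_nhds (s := Set.Ioi (0:ℝ)))
        simpa using this
      have := tendsto_q2_zero.sub h1
      simp at this
      exact this
    apply le_of_tendsto hlim
    filter_upwards [Ioo_mem_nhdsGT_of_mem ⟨le_refl (0:ℝ), ht.1⟩] with u hu
    exact (hmono ⟨hu.1, le_trans hu.2.le hle⟩ ⟨ht.1, hle⟩ hu.2).le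
  · have hanti : StrictAntiOn Kf (Set.Ico (1/2 : ℝ) 1) := by
      apply strictAntiOn_of_deriv_neg (convex_Ico (1/2 : ℝ) 1)
      · intro u hu
        have hu1 : u ∈ Set.Ioo (0:ℝ) 1 := ⟨lt_of_lt_of_le (by norm_num) hu.1, hu.2⟩
        exact (hasDerivAt_Kf hu1).continuousAt.continuousWithinAt
      · rw [interior_Ico]
        intro u hu
        have hu1 : u ∈ Set.Ioo (0:ℝ) 1 := ⟨lt_trans (by norm_num) hu.1, hu.2⟩
        rw [(hasDerivAt_Kf hu1).deriv]
        have := Wf_strictAnti h2 hu1 hu.1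
        rw [Wf_half] at this
        linarith
    have hlim : Tendsto Kf (𝓝[<] (1:ℝ)) (𝓝 0) := by
      have h1 : Tendsto (fun u : ℝ => u * (1 - u)) (𝓝[<] (1:ℝ)) (𝓝 0) := by
        have hc : Continuous (fun u : ℝ => u * (1 - u)) := by continuity
        have := (hc.tendsto 1).mono_left (nhdsWithin_le_nhds (s := Set.Iio (1:ℝ)))
        simpa using this
      have := tendsto_q2_one.sub h1
      simp at this
      exact this
    apply le_of_tendsto hlim
    filter_upwards [Ioo_mem_nhdsLT_of_mem ⟨ht.2, le_refl (1:ℝ)⟩] with u hu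
    exact (hanti ⟨hgt.le, ht.2⟩ ⟨le_trans hgt.le hu.1.le, hu.2⟩ hu.1).le

lemma q2_ge {t : ℝ} (ht : t ∈ Set.Ioo (0:ℝ) 1) : t * (1 - t) ≤ q2 t := by
  have := Kf_nonneg ht
  rw [Kf] at this
  linarith

noncomputable def Lf (t : ℝ) : ℝ := Real.log t - Real.log (1 - t) - Psi t

lemma hasDerivAt_Lf {t : ℝ} (ht : t ∈ Set.Ioo (0:ℝ) 1) :
    HasDerivAt Lf (t⁻¹ + (1-t)⁻¹ - (q2 t)⁻¹) t := by
  have h1 : HasDerivAt (fun u : ℝ => Real.log u) t⁻¹ t := Real.hasDerivAt_log ht.1.ne'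
  have h2 : HasDerivAt (fun u : ℝ => Real.log (1 - u)) (-(1-t)⁻¹) t := by
    have hin : HasDerivAt (fun u : ℝ => 1 - u) (-1) t := by
      simpa using (hasDerivAt_id t).const_sub 1
    have := (Real.hasDerivAt_log (by linarith [ht.2] : (1:ℝ) - t ≠ 0)).comp t hin
    refine this.congr_deriv ?_
    ring
  have h := (h1.sub h2).sub (hasDerivAt_Psi ht)
  refine h.congr_deriv ?_
  rw [q2_eq]; ring

lemma Lf_monotone : MonotoneOn Lf (Set.Ioo (0:ℝ) 1) := by
  apply monotoneOn_of_deriv_nonneg (convex_Ioo 0 1)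
  · intro t ht; exact (hasDerivAt_Lf ht).continuousAt.continuousWithinAt
  · rw [interior_Ioo]
    intro t ht
    exact ((hasDerivAt_Lf ht).differentiableAt).differentiableWithinAt
  · rw [interior_Ioo]
    intro t ht
    rw [(hasDerivAt_Lf ht).deriv]
    have hq := q2_ge ht
    have ht1 : 0 < t := ht.1
    have ht2 : 0 < 1 - t := by linarith [ht.2]
    have hpos : 0 < t * (1 - t) := mul_pos ht1 ht2
    have h1 : (q2 t)⁻¹ ≤ (t * (1-t))⁻¹ := inv_anti₀ hpos hq
    have h4 : (t * (1-t))⁻¹ = t⁻¹ + (1-t)⁻¹ := by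
      field_simp
      ring
    linarith

lemma Lf_half : Lf (1/2) = 0 := by
  rw [Lf, Psi_half]; norm_num

lemma Psi_nonneg_of_half {t : ℝ} (ht : t ∈ Set.Ioo (0:ℝ) 1) (h2 : 1/2 ≤ t) : 0 ≤ Psi t := by
  rcases eq_or_lt_of_le h2 with he | hlt
  · rw [← he, Psi_half]
  · have := Psi_strictMonoOn (by norm_num) ht hlt
    rw [Psi_half] at this
    exact this.le

lemma Psi_nonpos_of_half {t : ℝ} (ht : t ∈ Set.Ioo (0:ℝ) 1) (h2 : t ≤ 1/2) : Psi t ≤ 0 := by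
  rcases eq_or_lt_of_le h2 with he | hlt
  · rw [he, Psi_half]
  · have := Psi_strictMonoOn ht (by norm_num) hlt
    rw [Psi_half] at this
    exact this.le

lemma abs_Psi_le {t : ℝ} (ht : t ∈ Set.Ioo (0:ℝ) 1) : |Psi t| ≤ (t * (1 - t))⁻¹ := by
  have ht1 : 0 < t := ht.1
  have ht2 : 0 < 1 - t := by linarith [ht.2]
  have h2 : (1/2 : ℝ) ∈ Set.Ioo (0:ℝ) 1 := by norm_num
  rcases le_or_gt (1/2) t with hle | hlt
  · have hL := Lf_monotone h2 ht hle
    rw [Lf_half, Lf] at hL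
    have habs : |Psi t| = Psi t := abs_of_nonneg (Psi_nonneg_of_half ht hle)
    have hlog1 : Real.log t ≤ 0 := Real.log_nonpos ht1.le (by linarith [ht.2])
    have hlog2 : -Real.log (1 - t) ≤ (1-t)⁻¹ := by
      rw [← Real.log_inv]
      have := Real.log_le_sub_one_of_pos (inv_pos.2 ht2)
      linarith
    have hfin : (1-t)⁻¹ ≤ (t * (1-t))⁻¹ :=
      inv_anti₀ (mul_pos ht1 ht2) (by nlinarith)
    rw [habs]
    linarith
  · have hL := Lf_monotone ht h2 hlt.le
    rw [Lf_half, Lf] at hL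
    have habs : |Psi t| = -Psi t := abs_of_nonpos (Psi_nonpos_of_half ht hlt.le)
    have hlog1 : Real.log (1 - t) ≤ 0 := Real.log_nonpos ht2.le (by linarith [ht.1])
    have hlog2 : -Real.log t ≤ t⁻¹ := by
      rw [← Real.log_inv]
      have := Real.log_le_sub_one_of_pos (inv_pos.2 ht1)
      linarith
    have hfin : t⁻¹ ≤ (t * (1-t))⁻¹ :=
      inv_anti₀ (mul_pos ht1 ht2) (by nlinarith)
    rw [habs]
    linarith

lemma taylor_upper {h s : ℝ} (hh : h ∈ Set.Ioo (0:ℝ) 1) (hs : s ∈ Set.Ioo (0:ℝ) 1) :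
    q2 s - q2 h + Psi h * (s - h) ≤ -(s-h)^2 := by
  set F : ℝ → ℝ := fun t => q2 t + Psi h * t + (t - h)^2 with hF
  have hderiv : ∀ t ∈ Set.Ioo (0:ℝ) 1, HasDerivAt F (-(Psi t) + Psi h + 2*(t-h)) t := by
    intro t ht
    have h1 := (hasDerivAt_q2 ht).add ((hasDerivAt_id t).const_mul (Psi h))
    have h2 : HasDerivAt (fun t : ℝ => (t - h)^2) (2*(t-h)) t := by
      have := ((hasDerivAt_id t).sub_const h).pow 2
      refine this.congr_deriv ?_
      simp
    have h3 := h1.add h2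
    refine h3.congr_deriv ?_
    ring
  have key : F s ≤ F h := by
    rcases lt_trichotomy s h with hlt | heq | hgt
    · have hmono : StrictMonoOn F (Set.Icc s h) := by
        apply strictMonoOn_of_deriv_pos (convex_Icc s h)
        · intro t ht
          have ht1 : t ∈ Set.Ioo (0:ℝ) 1 := ⟨lt_of_lt_of_le hs.1 ht.1, lt_of_le_of_lt ht.2 hh.2⟩
          exact (hderiv t ht1).continuousAt.continuousWithinAt
        · rw [interior_Icc]
          intro t ht
          have ht1 : t ∈ Set.Ioo (0:ℝ) 1 := ⟨lt_trans hs.1 ht.1, lt_trans ht.2 hh.2⟩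
          rw [(hderiv t ht1).deriv]
          have hW := Wf_strictAnti ht1 hh ht.2
          rw [Wf, Wf] at hW
          linarith
      exact (hmono (Set.left_mem_Icc.2 hlt.le) (Set.right_mem_Icc.2 hlt.le) hlt).le
    · rw [heq]
    · have hanti : StrictAntiOn F (Set.Icc h s) := by
        apply strictAntiOn_of_deriv_neg (convex_Icc h s)
        · intro t ht
          have ht1 : t ∈ Set.Ioo (0:ℝ) 1 := ⟨lt_of_lt_of_le hh.1 ht.1, lt_of_le_of_lt ht.2 hs.2⟩
          exact (hderiv t ht1).continuousAt.continuousWithinAt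
        · rw [interior_Icc]
          intro t ht
          have ht1 : t ∈ Set.Ioo (0:ℝ) 1 := ⟨lt_trans hh.1 ht.1, lt_trans ht.2 hs.2⟩
          rw [(hderiv t ht1).deriv]
          have hW := Wf_strictAnti hh ht1 ht.1
          rw [Wf, Wf] at hW
          linarith
      exact (hanti (Set.left_mem_Icc.2 hgt.le) (Set.right_mem_Icc.2 hgt.le) hgt).le
  have hexp : q2 s + Psi h * s + (s - h)^2 ≤ q2 h + Psi h * h + (h - h)^2 := key
  have hring : Psi h * (s - h) = Psi h * s - Psi h * h := by ring
  nlinarith [hexp]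

lemma taylor_lower_near {h s : ℝ} (hh : h ∈ Set.Ioo (0:ℝ) 1) (hs : s ∈ Set.Ioo (0:ℝ) 1)
    (hnear : |s - h| ≤ h*(1-h)/2) :
    -(2/(h*(1-h))) * (s-h)^2 ≤ q2 s - q2 h + Psi h * (s - h) := by
  have hh1 : 0 < h := hh.1
  have hh2 : 0 < 1 - h := by linarith [hh.2]
  set a := h * (1-h) with ha
  have ha0 : 0 < a := mul_pos hh1 hh2
  have hsub : Set.Icc (h - a/2) (h + a/2) ⊆ Set.Ioo (0:ℝ) 1 := by
    intro t ht
    constructor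
    · nlinarith [ht.1]
    · nlinarith [ht.2]
  have hq4 : ∀ t ∈ Set.Icc (h - a/2) (h + a/2), a/4 ≤ q2 t := by
    intro t ht
    have ht1 := hsub ht
    have hq := q2_ge ht1
    have l1 : h/2 ≤ t := by nlinarith [ht.1]
    have l2 : (1-h)/2 ≤ 1 - t := by nlinarith [ht.2]
    have : (h/2) * ((1-h)/2) ≤ t * (1-t) :=
      mul_le_mul l1 l2 (by linarith) (by linarith [ht1.1])
    have heq : (h/2) * ((1-h)/2) = a/4 := by rw [ha]; ring
    linarith
  set V : ℝ → ℝ := fun t => -Psi t + (4/a) * t with hV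
  have hVd : ∀ t ∈ Set.Ioo (0:ℝ) 1, HasDerivAt V (-(q2 t)⁻¹ + 4/a) t := by
    intro t ht
    have h1 := (hasDerivAt_Psi ht).neg.add ((hasDerivAt_id t).const_mul (4/a))
    refine h1.congr_deriv ?_
    rw [q2_eq]; ring
  have hVmono : MonotoneOn V (Set.Icc (h - a/2) (h + a/2)) := by
    apply monotoneOn_of_deriv_nonneg (convex_Icc _ _)
    · intro t ht; exact (hVd t (hsub ht)).continuousAt.continuousWithinAt
    · intro t ht
      have ht' : t ∈ Set.Icc (h - a/2) (h + a/2) := interior_subset ht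
      exact ((hVd t (hsub ht')).differentiableAt).differentiableWithinAt
    · intro t ht
      rw [interior_Icc] at ht
      have ht' : t ∈ Set.Icc (h - a/2) (h + a/2) := ⟨ht.1.le, ht.2.le⟩
      rw [(hVd t (hsub ht')).deriv]
      have hq := hq4 t ht'
      have hinv : (q2 t)⁻¹ ≤ (a/4)⁻¹ := inv_anti₀ (by linarith) hq
      have : (a/4)⁻¹ = 4/a := by rw [inv_div]
      linarith
  set G : ℝ → ℝ := fun t => q2 t + Psi h * t + (2/a) * (t - h)^2 with hG
  have hGd : ∀ t ∈ Set.Ioo (0:ℝ) 1, HasDerivAt G (V t - V h) t := by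
    intro t ht
    have h1 := (hasDerivAt_q2 ht).add ((hasDerivAt_id t).const_mul (Psi h))
    have h2 : HasDerivAt (fun t : ℝ => (t - h)^2) (2*(t-h)) t := by
      have := ((hasDerivAt_id t).sub_const h).pow 2
      refine this.congr_deriv ?_
      simp
    have h3 := h1.add (h2.const_mul (2/a))
    refine h3.congr_deriv ?_
    rw [hV]
    field_simp
    ring
  have hmemh : h ∈ Set.Icc (h - a/2) (h + a/2) := by
    constructor <;> linarith
  have hmems : s ∈ Set.Icc (h - a/2) (h + a/2) := by
    have := abs_le.1 hnear
    constructor <;> [linarith [this.1]; linarith [this.2]]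
  have key : G h ≤ G s := by
    rcases le_or_gt h s with hle | hlt
    · have hmono : MonotoneOn G (Set.Icc h s) := by
        have hsubset : Set.Icc h s ⊆ Set.Icc (h - a/2) (h + a/2) := by
          intro t ht; exact ⟨by linarith [ht.1], by linarith [ht.2, hmems.2]⟩
        apply monotoneOn_of_deriv_nonneg (convex_Icc _ _)
        · intro t ht; exact (hGd t (hsub (hsubset ht))).continuousAt.continuousWithinAt
        · intro t ht
          have ht' := interior_subset ht
          exact ((hGd t (hsub (hsubset ht'))).differentiableAt).differentiableWithinAt
        · intro t ht
          rw [interior_Icc] at ht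
          have ht' : t ∈ Set.Icc h s := ⟨ht.1.le, ht.2.le⟩
          rw [(hGd t (hsub (hsubset ht'))).deriv]
          have := hVmono hmemh (hsubset ht') ht.1.le
          linarith
      exact hmono (Set.left_mem_Icc.2 hle) (Set.right_mem_Icc.2 hle) hle
    · have hanti : AntitoneOn G (Set.Icc s h) := by
        have hsubset : Set.Icc s h ⊆ Set.Icc (h - a/2) (h + a/2) := by
          intro t ht; exact ⟨by linarith [ht.1, hmems.1], by linarith [ht.2]⟩
        apply antitoneOn_of_deriv_nonpos (convex_Icc _ _)
        · intro t ht; exact (hGd t (hsub (hsubset ht))).continuousAt.continuousWithinAt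
        · intro t ht
          have ht' := interior_subset ht
          exact ((hGd t (hsub (hsubset ht'))).differentiableAt).differentiableWithinAt
        · intro t ht
          rw [interior_Icc] at ht
          have ht' : t ∈ Set.Icc s h := ⟨ht.1.le, ht.2.le⟩
          rw [(hGd t (hsub (hsubset ht'))).deriv]
          have := hVmono (hsubset ht') hmemh ht.2.le
          linarith
      exact hanti (Set.left_mem_Icc.2 hlt.le) (Set.right_mem_Icc.2 hlt.le) hlt.le
  have hexp : q2 h + Psi h * h + (2/a) * (h - h)^2 ≤ q2 s + Psi h * s + (2/a) * (s - h)^2 := key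
  nlinarith [hexp]

lemma taylor_lower {h s : ℝ} (hh : h ∈ Set.Ioo (0:ℝ) 1) (hs : s ∈ Set.Ioo (0:ℝ) 1) :
    -(4 / (h ^ 2 * (1 - h) ^ 2)) * (s - h) ^ 2 ≤ q2 s - q2 h + Psi h * (s - h) := by
  have hh1 : 0 < h := hh.1
  have hh2 : 0 < 1 - h := by linarith [hh.2]
  set a := h * (1-h) with ha
  have ha0 : 0 < a := mul_pos hh1 hh2
  have ha1 : a ≤ 1 := by nlinarith
  have hCeq : 4 / (h ^ 2 * (1 - h) ^ 2) = 4 / a^2 := by rw [ha]; ring_nf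
  rw [hCeq]
  have ha2pos : 0 < a^2 := by positivity
  rcases le_or_gt (|s - h|) (a/2) with hnear | hfar
  · have hmain := taylor_lower_near hh hs hnear
    have hcomp : 2/a ≤ 4/a^2 := by
      rw [div_le_div_iff₀ ha0 ha2pos]
      nlinarith
    nlinarith [sq_nonneg (s - h)]
  · set d := |s - h| with hd
    have hd0 : 0 < d := lt_trans (by positivity) hfar
    have hd2 : (s-h)^2 = d^2 := (sq_abs _).symm
    have hq2s := q2_pos s
    have hq2h := (q2_lt_half h).le
    have hPsi : |Psi h| ≤ a⁻¹ := by
      have := abs_Psi_le hh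
      rwa [← ha] at this
    have hprod : -(|Psi h| * d) ≤ Psi h * (s - h) := by
      rw [hd, ← abs_mul]
      exact neg_abs_le _
    have h3 : |Psi h| * d ≤ d / a := by
      rw [div_eq_mul_inv, mul_comm d]
      exact mul_le_mul_of_nonneg_right hPsi hd0.le
    have h1 : 1/2 ≤ 2*d^2/a^2 := by
      rw [le_div_iff₀ ha2pos]
      nlinarith
    have h2 : d/a ≤ 2*d^2/a^2 := by
      rw [div_le_div_iff₀ ha0 ha2pos]
      nlinarith [mul_lt_mul_of_pos_right (by linarith : a < 2*d) (mul_pos hd0 ha0)]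
    have hsum : 4/a^2 * d^2 = 2*d^2/a^2 + 2*d^2/a^2 := by ring
    rw [hd2]
    nlinarith

theorem q_second_order_estimate (h s : ℝ) (hh : h ∈ Set.Ioo (0 : ℝ) 1)
    (hs : s ∈ Set.Ioo (0 : ℝ) 1) :
    -(4 / (h ^ 2 * (1 - h) ^ 2)) * (s - h) ^ 2
        ≤ q2 s - q2 h - (-(Psi h)) * (s - h) ∧
      q2 s - q2 h - (-(Psi h)) * (s - h) ≤ -(s - h) ^ 2 := by
  have he : q2 s - q2 h - (-(Psi h)) * (s - h) = q2 s - q2 h + Psi h * (s - h) := by ring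
  rw [he]
  exact ⟨taylor_lower hh hs, taylor_upper hh hs⟩
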